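/- For w : Fin n → Bool and w' : Fin n' → Bool, if the simple graphs H_w and H_{w'} are isomorphic, then n = n' and w = w' (that is, w i = w' i for every index i, after identifying Fin n with Fin n'). -/

import Mathlib

/-- Vertices of the graph `H_w`: the path vertices `v₀, …, v_{n+1}`, five extra
clique vertices (forming a `K₆` with `v₀`), four extra clique vertices (forming a
`K₅` with `v_{n+1}`), and a pendant vertex for each `i` with `w i = true`. -/
def HVert (n : ℕ) (w : Fin n → Bool) : Type :=
  Fin (n + 2) ⊕ Fin 5 ⊕ Fin 4 ⊕ {i : Fin n // w i = true}

/-- The base relation generating the edges of `H_w`. -/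
def Hrel (n : ℕ) (w : Fin n → Bool) : HVert n w → HVert n w → Prop
  | Sum.inl i, Sum.inl j => (i : ℕ) + 1 = (j : ℕ)
  | Sum.inl i, Sum.inr (Sum.inl _) => (i : ℕ) = 0
  | Sum.inl i, Sum.inr (Sum.inr (Sum.inl _)) => (i : ℕ) = n + 1
  | Sum.inl i, Sum.inr (Sum.inr (Sum.inr j)) => (i : ℕ) = (j.1 : ℕ) + 1
  | Sum.inr (Sum.inl a), Sum.inr (Sum.inl b) => a ≠ b
  | Sum.inr (Sum.inr (Sum.inl a)), Sum.inr (Sum.inr (Sum.inl b)) => a ≠ b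
  | _, _ => False

/-- The simple graph `H_w` encoding the binary word `w`. -/
def Hgraph (n : ℕ) (w : Fin n → Bool) : SimpleGraph (HVert n w) :=
  SimpleGraph.fromRel (Hrel n w)

namespace HAux

open SimpleGraph

variable {n : ℕ} {w : Fin n → Bool}

abbrev pV (i : Fin (n + 2)) : HVert n w := Sum.inl i
abbrev aV (a : Fin 5) : HVert n w := Sum.inr (Sum.inl a)
abbrev bV (b : Fin 4) : HVert n w := Sum.inr (Sum.inr (Sum.inl b))
abbrev qV (j : {i : Fin n // w i = true}) : HVert n w := Sum.inr (Sum.inr (Sum.inr j))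

instance : Finite (HVert n w) := by unfold HVert; infer_instance

section ctor
variable {i i' : Fin (n + 2)} {a a' : Fin 5} {b b' : Fin 4} {j j' : {i : Fin n // w i = true}}

@[simp] lemma pV_inj : pV (n := n) (w := w) i = pV i' ↔ i = i' :=
  ⟨fun h => Sum.inl_injective h, fun h => by rw [h]⟩
@[simp] lemma aV_inj : aV (n := n) (w := w) a = aV a' ↔ a = a' :=
  ⟨fun h => Sum.inl_injective (Sum.inr_injective h), fun h => by rw [h]⟩
@[simp] lemma bV_inj : bV (n := n) (w := w) b = bV b' ↔ b = b' :=
  ⟨fun h => Sum.inl_injective (Sum.inr_injective (Sum.inr_injective h)), fun h => by rw [h]⟩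
@[simp] lemma qV_inj : qV (n := n) (w := w) j = qV j' ↔ j = j' :=
  ⟨fun h => Sum.inr_injective (Sum.inr_injective (Sum.inr_injective h)), fun h => by rw [h]⟩

@[simp] lemma pV_ne_aV : pV (n := n) (w := w) i ≠ aV a := fun h => nomatch h
@[simp] lemma aV_ne_pV : aV (n := n) (w := w) a ≠ pV i := fun h => nomatch h
@[simp] lemma pV_ne_bV : pV (n := n) (w := w) i ≠ bV b := fun h => nomatch h
@[simp] lemma bV_ne_pV : bV (n := n) (w := w) b ≠ pV i := fun h => nomatch h
@[simp] lemma pV_ne_qV : pV (n := n) (w := w) i ≠ qV j := fun h => nomatch h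
@[simp] lemma qV_ne_pV : qV (n := n) (w := w) j ≠ pV i := fun h => nomatch h
@[simp] lemma aV_ne_bV : aV (n := n) (w := w) a ≠ bV b := fun h => nomatch h
@[simp] lemma bV_ne_aV : bV (n := n) (w := w) b ≠ aV a := fun h => nomatch h
@[simp] lemma aV_ne_qV : aV (n := n) (w := w) a ≠ qV j := fun h => nomatch h
@[simp] lemma qV_ne_aV : qV (n := n) (w := w) j ≠ aV a := fun h => nomatch h
@[simp] lemma bV_ne_qV : bV (n := n) (w := w) b ≠ qV j := fun h => nomatch h
@[simp] lemma qV_ne_bV : qV (n := n) (w := w) j ≠ bV b := fun h => nomatch h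

end ctor

lemma qV_injective : Function.Injective (qV (n := n) (w := w)) := fun _ _ h => qV_inj.mp h
lemma aV_injective : Function.Injective (aV (n := n) (w := w)) := fun _ _ h => aV_inj.mp h

lemma adj_iff {x y : HVert n w} :
    (Hgraph n w).Adj x y ↔ x ≠ y ∧ (Hrel n w x y ∨ Hrel n w y x) :=
  SimpleGraph.fromRel_adj _ _ _

/-- potential function for distance lower bounds -/
def fV : HVert n w → ℕ
  | Sum.inl i => i
  | Sum.inr (Sum.inl _) => 0
  | Sum.inr (Sum.inr (Sum.inl _)) => n + 1
  | Sum.inr (Sum.inr (Sum.inr j)) => (j.1 : ℕ) + 2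

lemma hrel_f {x y : HVert n w} (h : Hrel n w x y) :
    fV x ≤ fV y + 1 ∧ fV y ≤ fV x + 1 := by
  rcases x with i | a | b | j <;> rcases y with i' | a' | b' | j' <;>
    simp_all [Hrel, fV] <;> omega

lemma adj_f {x y : HVert n w} (h : (Hgraph n w).Adj x y) :
    fV x ≤ fV y + 1 ∧ fV y ≤ fV x + 1 := by
  rw [adj_iff] at h
  rcases h.2 with h' | h'
  · exact hrel_f h'
  · exact (hrel_f h').symm

lemma walk_f {u v : HVert n w} (p : (Hgraph n w).Walk u v) :
    fV v ≤ fV u + p.length := by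
  induction p with
  | nil => simp
  | cons h p ih =>
    have := adj_f h
    simp only [SimpleGraph.Walk.length_cons]
    omega

lemma dist_lower {u v : HVert n w} (h : (Hgraph n w).Reachable u v) :
    fV v ≤ fV u + (Hgraph n w).dist u v := by
  obtain ⟨p, hp⟩ := h.exists_walk_length_eq_dist
  rw [← hp]; exact walk_f p

lemma path_walk : ∀ (k : ℕ) (hk : k < n + 2),
    ∃ p : (Hgraph n w).Walk (pV 0) (pV ⟨k, hk⟩), p.length = k := by
  intro k
  induction k with
  | zero =>
    intro hk
    have h0 : (⟨0, hk⟩ : Fin (n + 2)) = 0 := by ext; simp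
    rw [h0]
    exact ⟨SimpleGraph.Walk.nil, rfl⟩
  | succ k ih =>
    intro hk
    have hk' : k < n + 2 := by omega
    obtain ⟨p, hp⟩ := ih hk'
    have hadj : (Hgraph n w).Adj (pV ⟨k, hk'⟩) (pV ⟨k + 1, hk⟩) := by
      rw [adj_iff]
      refine ⟨?_, Or.inl ?_⟩
      · simp [Fin.ext_iff]
      · simp [Hrel]
    exact ⟨p.concat hadj, by simp [SimpleGraph.Walk.length_concat, hp]⟩

lemma dist_q (j : {i : Fin n // w i = true}) :
    (Hgraph n w).dist (pV 0) (qV j) = (j.1 : ℕ) + 2 := by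
  have hj : (j.1 : ℕ) + 1 < n + 2 := by have := j.1.isLt; omega
  obtain ⟨p, hp⟩ := path_walk ((j.1 : ℕ) + 1) hj
  have hadj : (Hgraph n w).Adj (pV ⟨(j.1 : ℕ) + 1, hj⟩) (qV j) := by
    rw [adj_iff]
    exact ⟨by simp, Or.inl (by simp [Hrel])⟩
  have hle : (Hgraph n w).dist (pV 0) (qV j) ≤ (j.1 : ℕ) + 2 := by
    have := SimpleGraph.dist_le (p.concat hadj)
    simpa [SimpleGraph.Walk.length_concat, hp] using this
  have hge := dist_lower (⟨p.concat hadj⟩ : (Hgraph n w).Reachable (pV 0) (qV j))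
  simp only [fV, Fin.val_zero] at hge
  omega

/-! ### Degrees -/

noncomputable def deg {V : Type*} (G : SimpleGraph V) (x : V) : ℕ := (G.neighborSet x).ncard

lemma two_le_deg {V : Type*} [Finite V] {G : SimpleGraph V} {x y z : V}
    (hxy : G.Adj x y) (hxz : G.Adj x z) (hne : y ≠ z) : 2 ≤ deg G x := by
  have hsub : ({y, z} : Set V) ⊆ G.neighborSet x := by
    intro t ht
    simp only [Set.mem_insert_iff, Set.mem_singleton_iff] at ht
    rcases ht with rfl | rfl
    · exact hxy
    · exact hxz
  calc (2 : ℕ) = ({y, z} : Set V).ncard := (Set.ncard_pair hne).symm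
    _ ≤ _ := Set.ncard_le_ncard hsub (Set.toFinite _)

lemma deg_le_of_subset {V : Type*} [Finite V] {G : SimpleGraph V} {x : V} {s : Set V}
    (h : G.neighborSet x ⊆ s) : deg G x ≤ s.ncard :=
  Set.ncard_le_ncard h (Set.toFinite _)

lemma ncard_le2 {α : Type*} (a b : α) : ({a, b} : Set α).ncard ≤ 2 := by
  have h1 := Set.ncard_insert_le a ({b} : Set α)
  have h2 := Set.ncard_singleton b
  omega

lemma ncard_le3 {α : Type*} (a b c : α) : ({a, b, c} : Set α).ncard ≤ 3 := by
  have h1 := Set.ncard_insert_le a ({b, c} : Set α)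
  have h2 := ncard_le2 b c
  omega

lemma ncard_le4 {α : Type*} (a b c d : α) : ({a, b, c, d} : Set α).ncard ≤ 4 := by
  have h1 := Set.ncard_insert_le a ({b, c, d} : Set α)
  have h2 := ncard_le3 b c d
  omega

lemma ncard_le5 {α : Type*} (a b c d e : α) : ({a, b, c, d, e} : Set α).ncard ≤ 5 := by
  have h1 := Set.ncard_insert_le a ({b, c, d, e} : Set α)
  have h2 := ncard_le4 b c d e
  omega

lemma neighbors_q (j : {i : Fin n // w i = true}) :
    (Hgraph n w).neighborSet (qV j) =
      {pV ⟨(j.1 : ℕ) + 1, by have := j.1.isLt; omega⟩} := by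
  have hj : (j.1 : ℕ) + 1 < n + 2 := by have := j.1.isLt; omega
  ext y
  simp only [mem_neighborSet, adj_iff, Set.mem_singleton_iff]
  rcases y with i | a | b | j'
  · constructor
    · rintro ⟨hne, h | h⟩
      · simp only [Hrel] at h
      · simp only [Hrel] at h
        simp only [pV_inj]
        ext
        simpa using h
    · intro h
      rw [pV_inj] at h
      subst h
      refine ⟨by exact qV_ne_pV, Or.inr ?_⟩
      simp [Hrel]
  · constructor
    · rintro ⟨hne, h | h⟩ <;> simp [Hrel] at h
    · intro h; exact absurd h (by simp)
  · constructor
    · rintro ⟨hne, h | h⟩ <;> simp [Hrel] at h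
    · intro h; exact absurd h (by simp)
  · constructor
    · rintro ⟨hne, h | h⟩ <;> simp [Hrel] at h
    · intro h; exact absurd h (by simp)

lemma deg_q (j : {i : Fin n // w i = true}) : deg (Hgraph n w) (qV j) = 1 := by
  rw [deg, neighbors_q, Set.ncard_singleton]


lemma adj_a_v0 (a : Fin 5) : (Hgraph n w).Adj (aV a) (pV 0) := by
  rw [adj_iff]
  refine ⟨by simp, Or.inr ?_⟩
  simp [Hrel]

lemma deg_a_ge (a : Fin 5) : 2 ≤ deg (Hgraph n w) (aV a) := by
  have hne5 : a ≠ a + 1 := (by decide : ∀ a : Fin 5, a ≠ a + 1) a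
  have h2 : (Hgraph n w).Adj (aV a) (aV (a + 1)) := by
    rw [adj_iff]
    refine ⟨fun hEq => hne5 (aV_inj.mp hEq), Or.inl ?_⟩
    simp only [Hrel]
    exact hne5
  exact two_le_deg (adj_a_v0 a) h2 (by simp)

lemma deg_b_ge (b : Fin 4) : 2 ≤ deg (Hgraph n w) (bV b) := by
  have hlt : n + 1 < n + 2 := by omega
  have hne4 : b ≠ b + 1 := (by decide : ∀ b : Fin 4, b ≠ b + 1) b
  have h1 : (Hgraph n w).Adj (bV b) (pV ⟨n + 1, hlt⟩) := by
    rw [adj_iff]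
    refine ⟨by simp, Or.inr ?_⟩
    simp [Hrel]
  have h2 : (Hgraph n w).Adj (bV b) (bV (b + 1)) := by
    rw [adj_iff]
    refine ⟨fun hEq => hne4 (bV_inj.mp hEq), Or.inl ?_⟩
    simp only [Hrel]
    exact hne4
  exact two_le_deg h1 h2 (by simp)

lemma deg_last_ge {i : Fin (n + 2)} (hin : (i : ℕ) = n + 1) :
    2 ≤ deg (Hgraph n w) (pV i) := by
  have hlt : n < n + 2 := by omega
  have h1 : (Hgraph n w).Adj (pV i) (pV ⟨n, hlt⟩) := by
    rw [adj_iff]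
    refine ⟨fun hEq => absurd (pV_inj.mp hEq) (Fin.ne_of_val_ne (by simp; omega)), Or.inr ?_⟩
    simp only [Hrel]
    simp [hin]
  have h2 : (Hgraph n w).Adj (pV i) (bV 0) := by
    rw [adj_iff]
    refine ⟨by simp, Or.inl ?_⟩
    simp only [Hrel]
    exact hin
  exact two_le_deg h1 h2 (by simp)

lemma deg_interior_ge {i : Fin (n + 2)} (h1 : 1 ≤ (i : ℕ)) (h2 : (i : ℕ) ≤ n) :
    2 ≤ deg (Hgraph n w) (pV i) := by
  have hm : (i : ℕ) - 1 < n + 2 := by omega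
  have hp : (i : ℕ) + 1 < n + 2 := by omega
  have ha1 : (Hgraph n w).Adj (pV i) (pV ⟨(i : ℕ) - 1, hm⟩) := by
    rw [adj_iff]
    refine ⟨fun hEq => absurd (pV_inj.mp hEq) (Fin.ne_of_val_ne (by simp; omega)), Or.inr ?_⟩
    simp only [Hrel]
    show (i : ℕ) - 1 + 1 = (i : ℕ)
    omega
  have ha2 : (Hgraph n w).Adj (pV i) (pV ⟨(i : ℕ) + 1, hp⟩) := by
    rw [adj_iff]
    refine ⟨fun hEq => absurd (pV_inj.mp hEq) (Fin.ne_of_val_ne (by simp)), Or.inl ?_⟩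
    simp only [Hrel]
  have hne : (pV ⟨(i : ℕ) - 1, hm⟩ : HVert n w) ≠ pV ⟨(i : ℕ) + 1, hp⟩ :=
    fun hEq => absurd (pV_inj.mp hEq) (Fin.ne_of_val_ne (by simp))
  exact two_le_deg ha1 ha2 hne


lemma neighbors_v0 :
    (Hgraph n w).neighborSet (pV 0) = insert (pV 1) (Set.range (aV (n := n) (w := w))) := by
  ext y
  simp only [mem_neighborSet, adj_iff, Set.mem_insert_iff, Set.mem_range]
  rcases y with i | a | b | j
  · constructor
    · rintro ⟨hne, h | h⟩
      · simp only [Hrel] at h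
        left
        simp only [pV_inj]
        ext
        simp only [Fin.val_one]
        simpa using h.symm
      · simp only [Hrel] at h
        rw [Fin.val_zero] at h
        omega
    · rintro (h | ⟨a, h⟩)
      · rw [pV_inj] at h
        subst h
        refine ⟨by show pV 0 ≠ pV 1; simp [Fin.ext_iff], Or.inl ?_⟩
        simp [Hrel]
      · exact absurd h (by simp)
  · constructor
    · intro _
      right
      exact ⟨a, rfl⟩
    · intro _
      refine ⟨by exact pV_ne_aV, Or.inl ?_⟩
      simp [Hrel]
  · constructor
    · rintro ⟨hne, h | h⟩ <;> simp [Hrel] at h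
    · rintro (h | ⟨a, h⟩) <;> exact absurd h (by simp)
  · constructor
    · rintro ⟨hne, h | h⟩ <;> simp [Hrel] at h
    · rintro (h | ⟨a, h⟩) <;> exact absurd h (by simp)

lemma deg_v0 : deg (Hgraph n w) (pV (n := n) (w := w) 0) = 6 := by
  rw [deg, neighbors_v0]
  rw [Set.ncard_insert_of_notMem (by simp) (Set.toFinite _)]
  have h5 : (Set.range (aV (n := n) (w := w))).ncard = 5 := by
    rw [← Nat.card_coe_set_eq, Nat.card_range_of_injective aV_injective,
      Nat.card_eq_fintype_card, Fintype.card_fin]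
  omega

lemma deg_a_le (a : Fin 5) : deg (Hgraph n w) (aV a) ≤ 5 := by
  have hsub : (Hgraph n w).neighborSet (aV a) ⊆
      {pV 0, aV (a + 1), aV (a + 2), aV (a + 3), aV (a + 4)} := by
    intro y hy
    rw [SimpleGraph.mem_neighborSet, adj_iff] at hy
    obtain ⟨hne, hrel⟩ := hy
    rcases y with i | b | b | j
    · have hi : (i : ℕ) = 0 := by
        rcases hrel with h | h <;> simp only [Hrel] at h
        exact h
      have hi' : i = 0 := by ext; simpa using hi
      subst hi'
      show pV 0 ∈ _
      simp
    · have hba : b ≠ a := by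
        intro hEq
        subst hEq
        exact hne rfl
      have hd := (by decide :
        ∀ a b : Fin 5, b ≠ a → b = a + 1 ∨ b = a + 2 ∨ b = a + 3 ∨ b = a + 4) a b hba
      show aV b ∈ _
      simp only [Set.mem_insert_iff, Set.mem_singleton_iff, aV_inj, aV_ne_pV, false_or]
      exact hd
    · rcases hrel with h | h <;> simp [Hrel] at h
    · rcases hrel with h | h <;> simp [Hrel] at h
  exact le_trans (deg_le_of_subset hsub) (ncard_le5 _ _ _ _ _)

lemma deg_b_le (b : Fin 4) : deg (Hgraph n w) (bV b) ≤ 4 := by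
  have hlt : n + 1 < n + 2 := by omega
  have hsub : (Hgraph n w).neighborSet (bV b) ⊆
      {pV ⟨n + 1, hlt⟩, bV (b + 1), bV (b + 2), bV (b + 3)} := by
    intro y hy
    rw [SimpleGraph.mem_neighborSet, adj_iff] at hy
    obtain ⟨hne, hrel⟩ := hy
    rcases y with i | a | c | j
    · have hi : (i : ℕ) = n + 1 := by
        rcases hrel with h | h <;> simp only [Hrel] at h
        exact h
      have hi' : i = ⟨n + 1, hlt⟩ := by ext; simpa using hi
      subst hi'
      show pV ⟨n + 1, hlt⟩ ∈ _
      simp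
    · rcases hrel with h | h <;> simp [Hrel] at h
    · have hca : c ≠ b := by
        intro hEq
        subst hEq
        exact hne rfl
      have hd := (by decide :
        ∀ b c : Fin 4, c ≠ b → c = b + 1 ∨ c = b + 2 ∨ c = b + 3) b c hca
      show bV c ∈ _
      simp only [Set.mem_insert_iff, Set.mem_singleton_iff, bV_inj, bV_ne_pV, false_or]
      exact hd
    · rcases hrel with h | h <;> simp [Hrel] at h
  exact le_trans (deg_le_of_subset hsub) (ncard_le4 _ _ _ _)

lemma deg_last_le {i : Fin (n + 2)} (hin : (i : ℕ) = n + 1) :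
    deg (Hgraph n w) (pV i) ≤ 5 := by
  have hlt : n < n + 2 := by omega
  have hsub : (Hgraph n w).neighborSet (pV i) ⊆
      {pV ⟨n, hlt⟩, bV 0, bV 1, bV 2, bV 3} := by
    intro y hy
    rw [SimpleGraph.mem_neighborSet, adj_iff] at hy
    obtain ⟨hne, hrel⟩ := hy
    rcases y with i' | a | c | j
    · have hi : (i' : ℕ) = n := by
        rcases hrel with h | h <;> simp only [Hrel] at h <;> have := i'.isLt <;> omega
      have hi' : i' = ⟨n, hlt⟩ := by ext; simpa using hi
      subst hi'
      show pV ⟨n, hlt⟩ ∈ _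
      simp
    · exfalso
      rcases hrel with h | h <;> simp only [Hrel] at h
      omega
    · show bV c ∈ _
      simp only [Set.mem_insert_iff, Set.mem_singleton_iff, bV_inj, bV_ne_pV, false_or]
      clear hne hrel
      revert c
      decide
    · exfalso
      rcases hrel with h | h <;> simp only [Hrel] at h
      have := j.1.isLt
      omega
  exact le_trans (deg_le_of_subset hsub) (ncard_le5 _ _ _ _ _)

lemma deg_interior_le {i : Fin (n + 2)} (h1 : 1 ≤ (i : ℕ)) (h2 : (i : ℕ) ≤ n) :
    deg (Hgraph n w) (pV i) ≤ 3 := by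
  have hm : (i : ℕ) - 1 < n + 2 := by omega
  have hp : (i : ℕ) + 1 < n + 2 := by omega
  have hm' : (i : ℕ) - 1 < n := by omega
  by_cases hw0 : w ⟨(i : ℕ) - 1, hm'⟩ = true
  · have hsub : (Hgraph n w).neighborSet (pV i) ⊆
        {pV ⟨(i : ℕ) - 1, hm⟩, pV ⟨(i : ℕ) + 1, hp⟩, qV ⟨⟨(i : ℕ) - 1, hm'⟩, hw0⟩} := by
      intro y hy
      rw [SimpleGraph.mem_neighborSet, adj_iff] at hy
      obtain ⟨hne, hrel⟩ := hy
      rcases y with i' | a | c | j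
      · show pV i' ∈ _
        simp only [Set.mem_insert_iff, Set.mem_singleton_iff, pV_inj, pV_ne_qV, or_false]
        rcases hrel with h | h <;> simp only [Hrel] at h
        · right; ext; simp; omega
        · left; ext; simp; omega
      · exfalso
        rcases hrel with h | h <;> simp only [Hrel] at h
        omega
      · exfalso
        rcases hrel with h | h <;> simp only [Hrel] at h
        omega
      · show qV j ∈ _
        simp only [Set.mem_insert_iff, Set.mem_singleton_iff, qV_inj, qV_ne_pV, false_or]
        rcases hrel with h | h <;> simp only [Hrel] at h
        refine Subtype.ext ?_
        ext
        simp
        omega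
    exact le_trans (deg_le_of_subset hsub) (ncard_le3 _ _ _)
  · have hsub : (Hgraph n w).neighborSet (pV i) ⊆
        {pV ⟨(i : ℕ) - 1, hm⟩, pV ⟨(i : ℕ) + 1, hp⟩} := by
      intro y hy
      rw [SimpleGraph.mem_neighborSet, adj_iff] at hy
      obtain ⟨hne, hrel⟩ := hy
      rcases y with i' | a | c | j
      · show pV i' ∈ _
        simp only [Set.mem_insert_iff, Set.mem_singleton_iff, pV_inj]
        rcases hrel with h | h <;> simp only [Hrel] at h
        · right; ext; simp; omega
        · left; ext; simp; omega
      · exfalso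
        rcases hrel with h | h <;> simp only [Hrel] at h
        omega
      · exfalso
        rcases hrel with h | h <;> simp only [Hrel] at h
        omega
      · exfalso
        rcases hrel with h | h <;> simp only [Hrel] at h
        have hj : j.1 = ⟨(i : ℕ) - 1, hm'⟩ := by ext; simp; omega
        exact hw0 (hj ▸ j.2)
    exact le_trans (le_trans (deg_le_of_subset hsub) (ncard_le2 _ _)) (by omega)


lemma deg_one_iff {x : HVert n w} :
    deg (Hgraph n w) x = 1 ↔ ∃ j, x = qV j := by
  constructor
  · intro hx
    rcases x with i | a | b | j
    · exfalso
      by_cases hi0 : (i : ℕ) = 0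
      · have hi' : i = 0 := by ext; simpa using hi0
        subst hi'
        have h6 := deg_v0 (n := n) (w := w)
        simp only [pV] at h6
        omega
      · by_cases hin : (i : ℕ) = n + 1
        · have hlow := deg_last_ge (w := w) hin
          simp only [pV] at hlow
          omega
        · have hv1 : 1 ≤ (i : ℕ) := by omega
          have hv2 : (i : ℕ) ≤ n := by have := i.isLt; omega
          have hlow := deg_interior_ge (w := w) hv1 hv2
          simp only [pV] at hlow
          omega
    · exfalso
      have hlow := deg_a_ge (w := w) a
      simp only [aV] at hlow
      omega
    · exfalso
      have hlow := deg_b_ge (w := w) b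
      simp only [bV] at hlow
      omega
    · exact ⟨j, rfl⟩
  · rintro ⟨j, rfl⟩
    exact deg_q j

lemma deg_six_iff {x : HVert n w} :
    deg (Hgraph n w) x = 6 ↔ x = pV 0 := by
  constructor
  · intro hx
    rcases x with i | a | b | j
    · by_cases hi0 : (i : ℕ) = 0
      · have hi' : i = 0 := by ext; simpa using hi0
        rw [hi']
      · exfalso
        by_cases hin : (i : ℕ) = n + 1
        · have hup := deg_last_le (w := w) hin
          simp only [pV] at hup
          omega
        · have hv1 : 1 ≤ (i : ℕ) := by omega
          have hv2 : (i : ℕ) ≤ n := by have := i.isLt; omega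
          have hup := deg_interior_le (w := w) hv1 hv2
          simp only [pV] at hup
          omega
    · exfalso
      have hup := deg_a_le (w := w) a
      simp only [aV] at hup
      omega
    · exfalso
      have hup := deg_b_le (w := w) b
      simp only [bV] at hup
      omega
    · exfalso
      have h1 := deg_q (w := w) j
      simp only [qV] at h1
      omega
  · rintro rfl
    exact deg_v0

section iso
variable {V V' : Type*} {G : SimpleGraph V} {G' : SimpleGraph V'}

lemma deg_map (e : G ≃g G') (x : V) : deg G' (e x) = deg G x := by
  rw [deg, deg, ← Nat.card_coe_set_eq, ← Nat.card_coe_set_eq]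
  exact Nat.card_congr (e.mapNeighborSet x).symm

lemma dist_map_le (e : G ≃g G') (u v : V) : G'.dist (e u) (e v) ≤ G.dist u v := by
  by_cases h : G.Reachable u v
  · obtain ⟨p, hp⟩ := h.exists_walk_length_eq_dist
    calc G'.dist (e u) (e v) ≤ (p.map e.toHom).length := SimpleGraph.dist_le _
      _ = p.length := SimpleGraph.Walk.length_map _ _
      _ = _ := hp
  · have h' : ¬ G'.Reachable (e u) (e v) := by
      rintro ⟨q⟩
      exact h ⟨(q.map e.symm.toHom).copy (RelIso.symm_apply_apply e u) (RelIso.symm_apply_apply e v)⟩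
    rw [SimpleGraph.dist_eq_zero_of_not_reachable h,
      SimpleGraph.dist_eq_zero_of_not_reachable h']

lemma dist_map (e : G ≃g G') (u v : V) : G'.dist (e u) (e v) = G.dist u v := by
  refine le_antisymm (dist_map_le e u v) ?_
  have := dist_map_le e.symm (e u) (e v)
  simpa using this

end iso

lemma pendant_transfer {n n' : ℕ} {w : Fin n → Bool} {w' : Fin n' → Bool}
    (e : Hgraph n w ≃g Hgraph n' w') {i : Fin n} (hi : w i = true) :
    ∃ j : Fin n', (j : ℕ) = (i : ℕ) ∧ w' j = true := by
  have hv0 : e (pV 0) = pV 0 := by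
    have h6 : deg (Hgraph n' w') (e (pV 0)) = 6 := by
      rw [deg_map]
      exact deg_v0
    exact deg_six_iff.mp h6
  have h1 : deg (Hgraph n' w') (e (qV ⟨i, hi⟩)) = 1 := by
    rw [deg_map]
    exact deg_q _
  obtain ⟨j, hj⟩ := deg_one_iff.mp h1
  refine ⟨j.1, ?_, j.2⟩
  have hd : (Hgraph n' w').dist (pV 0) (e (qV ⟨i, hi⟩)) = (i : ℕ) + 2 := by
    rw [← hv0, dist_map]
    exact dist_q _
  rw [hj, dist_q] at hd
  omega

end HAux

theorem stmt5 {n n' : ℕ} (w : Fin n → Bool) (w' : Fin n' → Bool)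
    (h : Nonempty (Hgraph n w ≃g Hgraph n' w')) :
    ∃ hn : n = n', ∀ i : Fin n, w i = w' (Fin.cast hn i) := by
  classical
  obtain ⟨e⟩ := h
  have hset : {x : HVert n w | HAux.deg (Hgraph n w) x = 1} = Set.range HAux.qV := by
    ext x
    simp only [Set.mem_setOf_eq, Set.mem_range, HAux.deg_one_iff]
    exact ⟨fun ⟨j, hj⟩ => ⟨j, hj.symm⟩, fun ⟨j, hj⟩ => ⟨j, hj.symm⟩⟩
  have hset' : {x : HVert n' w' | HAux.deg (Hgraph n' w') x = 1} = Set.range HAux.qV := by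
    ext x
    simp only [Set.mem_setOf_eq, Set.mem_range, HAux.deg_one_iff]
    exact ⟨fun ⟨j, hj⟩ => ⟨j, hj.symm⟩, fun ⟨j, hj⟩ => ⟨j, hj.symm⟩⟩
  have hT : Nat.card {x : HVert n w | HAux.deg (Hgraph n w) x = 1} =
      Nat.card {i : Fin n // w i = true} := by
    rw [hset]
    exact Nat.card_range_of_injective HAux.qV_injective
  have hT' : Nat.card {x : HVert n' w' | HAux.deg (Hgraph n' w') x = 1} =
      Nat.card {i : Fin n' // w' i = true} := by
    rw [hset']
    exact Nat.card_range_of_injective HAux.qV_injective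
  have hEqD : Nat.card {x : HVert n w | HAux.deg (Hgraph n w) x = 1} =
      Nat.card {x : HVert n' w' | HAux.deg (Hgraph n' w') x = 1} := by
    refine Nat.card_congr (e.toEquiv.subtypeEquiv fun x => ?_)
    simp only [Set.mem_setOf_eq]
    have hx : HAux.deg (Hgraph n' w') (e.toEquiv x) = HAux.deg (Hgraph n w) x :=
      HAux.deg_map e x
    rw [hx]
  have hV : Nat.card (HVert n w) =
      (n + 2) + (5 + (4 + Nat.card {i : Fin n // w i = true})) := by
    have h0 : Nat.card (HVert n w) =
        Nat.card (Fin (n + 2) ⊕ Fin 5 ⊕ Fin 4 ⊕ {i : Fin n // w i = true}) := rfl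
    rw [h0, Nat.card_sum, Nat.card_sum, Nat.card_sum]
    simp [Nat.card_eq_fintype_card]
  have hV' : Nat.card (HVert n' w') =
      (n' + 2) + (5 + (4 + Nat.card {i : Fin n' // w' i = true})) := by
    have h0 : Nat.card (HVert n' w') =
        Nat.card (Fin (n' + 2) ⊕ Fin 5 ⊕ Fin 4 ⊕ {i : Fin n' // w' i = true}) := rfl
    rw [h0, Nat.card_sum, Nat.card_sum, Nat.card_sum]
    simp [Nat.card_eq_fintype_card]
  have hVV : Nat.card (HVert n w) = Nat.card (HVert n' w') := Nat.card_congr e.toEquiv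
  have hn : n = n' := by omega
  refine ⟨hn, fun i => ?_⟩
  cases hwi : w i with
  | true =>
    obtain ⟨j, hj1, hj2⟩ := HAux.pendant_transfer e hwi
    have hj : j = Fin.cast hn i := by ext; simp [hj1]
    rw [← hj, hj2]
  | false =>
    by_contra hcon
    have hwi' : w' (Fin.cast hn i) = true := by
      cases hw2 : w' (Fin.cast hn i)
      · rw [hw2] at hcon
        exact absurd rfl hcon
      · rfl
    obtain ⟨j, hj1, hj2⟩ := HAux.pendant_transfer e.symm hwi'
    have hj : j = i := by ext; simpa using hj1
    rw [hj] at hj2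
    rw [hwi] at hj2
    exact Bool.noConfusion hj2
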